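/- Fix k ≥ 1 and dimension d. There exists ε > 0 depending only on k and d such that: if Q ⊆ R^d is a cube of sidelength r > 0 and E ⊆ Q is εr-dense in Q (meaning the balls of radius εr around points of E cover Q), then there exists a signed measure μ supported on a finite subset of E with total variation ‖μ‖ ≤ C(k,d) r^d, such that for all C^k functions φ on Q, |∫_Q φ(x) dx − ∫ φ dμ| ≤ C(k,d) r^{d+k} sup_{x ∈ Q} |∇^k φ(x)|. -/

import Mathlib

open MeasureTheory

/-- A cube in `ℝ^d` with corner `a` and sidelength `r`. -/
def cube (d : ℕ) (a : EuclideanSpace ℝ (Fin d)) (r : ℝ) : Set (EuclideanSpace ℝ (Fin d)) :=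
  {x | ∀ i, x i ∈ Set.Icc (a i) (a i + r)}

open Set Matrix

variable {E : Type*} [NormedAddCommGroup E] [NormedSpace ℝ E]

lemma taylor_line_deriv {s : Set E} (hs : Convex ℝ s) (hu : UniqueDiffOn ℝ s)
    {k : ℕ} {φ : E → ℝ} (hφ : ContDiffOn ℝ k φ s) {x₀ x : E}
    (h0 : x₀ ∈ s) (hx : x ∈ s) :
    ∀ j, j ≤ k → ∀ t ∈ Icc (0:ℝ) 1,
      iteratedDerivWithin j (fun t' => φ (x₀ + t' • (x - x₀))) (Icc 0 1) t
        = iteratedFDerivWithin ℝ j φ s (x₀ + t • (x - x₀)) (fun _ => x - x₀) := by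
  set v := x - x₀ with hv
  set L : ℝ → E := fun t => x₀ + t • v with hL
  have hmap : MapsTo L (Icc (0:ℝ) 1) s := fun t ht => hs.add_smul_sub_mem h0 hx ht
  intro j
  induction j with
  | zero => intro _ t ht; simp
  | succ j ih =>
    intro hjk t ht
    have hj : j ≤ k := le_of_lt (Nat.lt_of_succ_le hjk)
    have hdiff : DifferentiableOn ℝ (iteratedFDerivWithin ℝ j φ s) s :=
      hφ.differentiableOn_iteratedFDerivWithin (by exact_mod_cast Nat.lt_of_succ_le hjk) hu
    rw [iteratedDerivWithin_succ]
    have hcongr : derivWithin (iteratedDerivWithin j (fun t' => φ (L t')) (Icc 0 1)) (Icc 0 1) t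
        = derivWithin (fun t' => iteratedFDerivWithin ℝ j φ s (L t') (fun _ => v)) (Icc 0 1) t :=
      derivWithin_congr (fun y hy => ih hj y hy) (ih hj t ht)
    rw [hcongr]
    have hLd : HasDerivWithinAt L v (Icc 0 1) t := by
      have h := (((hasDerivAt_id t).smul_const v).const_add x₀).hasDerivWithinAt (s := Icc 0 1)
      rw [one_smul] at h
      exact h
    have hψ : HasFDerivWithinAt (iteratedFDerivWithin ℝ j φ s)
        (fderivWithin ℝ (iteratedFDerivWithin ℝ j φ s) s (L t)) s (L t) :=
      (hdiff (L t) (hmap ht)).hasFDerivWithinAt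
    have hcomp : HasDerivWithinAt
        (fun t' => iteratedFDerivWithin ℝ j φ s (L t') (fun _ => v))
        ((fderivWithin ℝ (iteratedFDerivWithin ℝ j φ s) s (L t) v) (fun _ => v)) (Icc 0 1) t := by
      have := (hψ.continuousMultilinear_apply_const (fun _ => v)).comp_hasDerivWithinAt t hLd hmap
      exact this
    rw [hcomp.derivWithin ((uniqueDiffOn_Icc zero_lt_one) t ht)]
    rw [iteratedFDerivWithin_succ_apply_left]
    rfl

lemma taylor_multivar_bound {s : Set E} (hs : Convex ℝ s) (hu : UniqueDiffOn ℝ s)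
    {k : ℕ} (hk : 1 ≤ k) {φ : E → ℝ} (hφ : ContDiffOn ℝ k φ s) {x₀ x : E}
    (h0 : x₀ ∈ s) (hx : x ∈ s) {M : ℝ} (hM0 : 0 ≤ M)
    (hM : ∀ y ∈ s, ‖iteratedFDerivWithin ℝ k φ s y‖ ≤ M) :
    |φ x - ∑ j ∈ Finset.range k, ((Nat.factorial j : ℝ)⁻¹) *
        iteratedFDerivWithin ℝ j φ s x₀ (fun _ => x - x₀)| ≤ M * ‖x - x₀‖ ^ k := by
  obtain ⟨n, rfl⟩ : ∃ n, k = n + 1 := ⟨k - 1, (Nat.succ_pred_eq_of_pos hk).symm⟩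
  set v := x - x₀ with hv
  set L : ℝ → E := fun t => x₀ + t • v with hL
  set g : ℝ → ℝ := fun t => φ (L t) with hgdef
  have hmap : MapsTo L (Icc (0:ℝ) 1) s := fun t ht => hs.add_smul_sub_mem h0 hx ht
  have hLc : ContDiff ℝ (n+1 : ℕ) L := contDiff_const.add (contDiff_id.smul contDiff_const)
  have hg : ContDiffOn ℝ (n+1 : ℕ) g (Icc 0 1) := hφ.comp hLc.contDiffOn hmap
  have key := taylor_line_deriv hs hu hφ h0 hx
  have hC : ∀ y ∈ Icc (0:ℝ) 1, ‖iteratedDerivWithin (n+1) g (Icc 0 1) y‖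
      ≤ M * ‖v‖ ^ (n+1) := by
    intro y hy
    rw [key (n+1) le_rfl y hy]
    calc ‖iteratedFDerivWithin ℝ (n+1) φ s (L y) (fun _ => v)‖
        ≤ ‖iteratedFDerivWithin ℝ (n+1) φ s (L y)‖ * ∏ _i : Fin (n+1), ‖v‖ :=
          (iteratedFDerivWithin ℝ (n+1) φ s (L y)).le_opNorm _
      _ ≤ M * ‖v‖ ^ (n+1) := by
          rw [Finset.prod_const, Finset.card_univ, Fintype.card_fin]
          exact mul_le_mul_of_nonneg_right (hM _ (hmap hy)) (by positivity)
  have hb := taylor_mean_remainder_bound (zero_le_one) hg (right_mem_Icc.2 zero_le_one) hC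
  have hg1 : g 1 = φ x := by simp [hgdef, hL, hv]
  have htay : taylorWithinEval g n (Icc 0 1) 0 1
      = ∑ j ∈ Finset.range (n+1), ((Nat.factorial j : ℝ)⁻¹) *
          iteratedFDerivWithin ℝ j φ s x₀ (fun _ => v) := by
    rw [taylor_within_apply]
    refine Finset.sum_congr rfl fun j hj => ?_
    have hj' : j ≤ n + 1 := le_of_lt (Finset.mem_range.1 hj)
    have := key j (by omega) 0 (left_mem_Icc.2 zero_le_one)
    have hL0 : L 0 = x₀ := by simp [hL]
    rw [smul_eq_mul, this]
    simp [hv]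
  rw [hg1, htay] at hb
  calc |φ x - ∑ j ∈ Finset.range (n+1), ((Nat.factorial j : ℝ)⁻¹) *
        iteratedFDerivWithin ℝ j φ s x₀ (fun _ => v)|
      ≤ M * ‖v‖ ^ (n+1) * (1 - 0) ^ (n+1) / (Nat.factorial n) := hb
    _ ≤ M * ‖v‖ ^ (n+1) := by
        rw [sub_zero, one_pow, mul_one]
        exact div_le_self (by positivity) (by exact_mod_cast Nat.one_le_iff_ne_zero.2 (Nat.factorial_ne_zero n))



variable {d : ℕ} {a : EuclideanSpace ℝ (Fin d)} {r : ℝ}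

lemma contCoord (i : Fin d) : Continuous fun x : EuclideanSpace ℝ (Fin d) => x i :=
  (continuous_apply i).comp (PiLp.continuousLinearEquiv 2 ℝ _).continuous

lemma convex_cube : Convex ℝ (cube d a r) := by
  intro x hx y hy t1 t2 ht1 ht2 hsum i
  have := (convex_Icc (a i) (a i + r)) (hx i) (hy i) ht1 ht2 hsum
  simpa [PiLp.add_apply, PiLp.smul_apply] using this

lemma isClosed_cube : IsClosed (cube d a r) := by
  have : cube d a r = ⋂ i, (fun x : EuclideanSpace ℝ (Fin d) => x i) ⁻¹' Icc (a i) (a i + r) := by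
    ext x; simp [cube]
  rw [this]
  exact isClosed_iInter fun i => isClosed_Icc.preimage (contCoord i)

lemma coord_dist_le (x y : EuclideanSpace ℝ (Fin d)) (i : Fin d) : |x i - y i| ≤ dist x y := by
  rw [EuclideanSpace.dist_eq]
  have h1 : |x i - y i| = Real.sqrt (dist (x i) (y i) ^ 2) := by
    rw [Real.sqrt_sq dist_nonneg, Real.dist_eq]
  rw [h1]
  apply Real.sqrt_le_sqrt
  exact Finset.single_le_sum (f := fun j => dist (x j) (y j) ^ 2)
    (fun j _ => sq_nonneg _) (Finset.mem_univ i)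

lemma cube_subset_ball (hr : 0 ≤ r) : cube d a r ⊆ Metric.closedBall a (Real.sqrt d * r) := by
  intro x hx
  simp only [Metric.mem_closedBall, EuclideanSpace.dist_eq]
  have hb : ∀ i, dist (x i) (a i) ^ 2 ≤ r ^ 2 := by
    intro i
    have h1 := (hx i).1; have h2 := (hx i).2
    rw [Real.dist_eq, sq_abs]
    nlinarith
  calc Real.sqrt (∑ i, dist (x i) (a i) ^ 2) ≤ Real.sqrt (∑ _i : Fin d, r ^ 2) :=
        Real.sqrt_le_sqrt (Finset.sum_le_sum fun i _ => hb i)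
    _ = Real.sqrt d * r := by
        rw [Finset.sum_const, Finset.card_univ, Fintype.card_fin, nsmul_eq_mul]
        rw [Real.sqrt_mul (by positivity), Real.sqrt_sq hr]

lemma isCompact_cube (hr : 0 ≤ r) : IsCompact (cube d a r) :=
  Metric.isCompact_of_isClosed_isBounded isClosed_cube
    (Metric.isBounded_closedBall.subset (cube_subset_ball hr))

lemma measurableSet_cube : MeasurableSet (cube d a r) := isClosed_cube.measurableSet

lemma uniqueDiffOn_cube (hr : 0 < r) : UniqueDiffOn ℝ (cube d a r) := by
  apply uniqueDiffOn_convex convex_cube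
  set c : EuclideanSpace ℝ (Fin d) := (WithLp.equiv 2 (Fin d → ℝ)).symm (fun i => a i + r / 2)
  have hc : ∀ i, c i = a i + r / 2 := fun i => rfl
  refine ⟨c, mem_interior.2 ⟨⋂ i, (fun x : EuclideanSpace ℝ (Fin d) => x i) ⁻¹' Ioo (a i) (a i + r), ?_, ?_, ?_⟩⟩
  · intro x hx i
    simp only [mem_iInter, mem_preimage, mem_Ioo] at hx
    exact ⟨(hx i).1.le, (hx i).2.le⟩
  · exact isOpen_iInter_of_finite fun i => isOpen_Ioo.preimage (contCoord i)
  · simp only [mem_iInter, mem_preimage, mem_Ioo, hc]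
    intro i; constructor <;> linarith

lemma corner_mem_cube (hr : 0 ≤ r) : a ∈ cube d a r := by
  intro i; exact ⟨le_refl _, by linarith⟩

lemma volume_cube (hr : 0 ≤ r) : volume (cube d a r) = ENNReal.ofReal r ^ d := by
  have he : cube d a r = (MeasurableEquiv.toLp 2 (Fin d → ℝ)).symm ⁻¹'
      (Set.univ.pi fun i => Icc (a i) (a i + r)) := by
    ext x; simp [cube, Set.mem_pi, Pi.le_def, forall_and]
  rw [he, (EuclideanSpace.volume_preserving_symm_measurableEquiv_toLp (Fin d)).measure_preimage
    ((MeasurableSet.univ_pi fun i => measurableSet_Icc).nullMeasurableSet)]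
  rw [volume_pi_pi]
  simp [Real.volume_Icc]

lemma volume_cube_toReal (hr : 0 ≤ r) : (volume (cube d a r)).toReal = r ^ d := by
  rw [volume_cube hr, ← ENNReal.ofReal_pow hr, ENNReal.toReal_ofReal (by positivity)]

lemma volume_cube_lt_top (hr : 0 ≤ r) : volume (cube d a r) < ⊤ := by
  rw [volume_cube hr]; exact ENNReal.pow_lt_top ENNReal.ofReal_lt_top

noncomputable def tnode (k : ℕ) (j : Fin k) : ℝ := ((j : ℕ) + 1/2) / k

noncomputable def gfun (d k : ℕ) : (Fin d → Fin k) → Fin d → ℝ := fun α i => tnode k (α i)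

noncomputable def matFun (d k : ℕ) (p : (Fin d → Fin k) → Fin d → ℝ) :
    Matrix (Fin d → Fin k) (Fin d → Fin k) ℝ :=
  fun β α => ∏ i, (p α i) ^ (β i : ℕ)

lemma tnode_mem (k : ℕ) (j : Fin k) : tnode k j ∈ Icc (0:ℝ) 1 := by
  have hk : 0 < (k:ℝ) := by exact_mod_cast j.pos
  have hjk : ((j:ℕ):ℝ) < k := by exact_mod_cast j.isLt
  have hj0 : (0:ℝ) ≤ ((j:ℕ):ℝ) := by positivity
  constructor
  · apply div_nonneg _ hk.le; linarith
  · unfold tnode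
    rw [div_le_one hk]
    have : ((j:ℕ):ℝ) + 1 ≤ k := by exact_mod_cast j.isLt
    linarith

lemma tnode_strictMono (k : ℕ) : StrictMono (tnode k) := by
  intro i j hij
  have hk : 0 < (k:ℝ) := by exact_mod_cast i.pos
  have : ((i:ℕ):ℝ) < ((j:ℕ):ℝ) := by exact_mod_cast hij
  unfold tnode
  gcongr

lemma tnode_injective (k : ℕ) : Function.Injective (tnode k) :=
  (tnode_strictMono k).injective

lemma det_matFun_gfun (d k : ℕ) : (matFun d k (gfun d k)).det ≠ 0 := by
  classical
  set W : Matrix (Fin k) (Fin k) ℝ := (Matrix.vandermonde (tnode k))ᵀ with hW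
  have hdetW : W.det ≠ 0 := by
    rw [hW, Matrix.det_transpose, Matrix.det_vandermonde]
    apply Finset.prod_ne_zero_iff.2
    intro i _
    apply Finset.prod_ne_zero_iff.2
    intro j hj
    have : i < j := by simpa using hj
    exact sub_ne_zero.2 fun h => (this.ne (tnode_injective k h.symm)).elim
  set N : Matrix (Fin d → Fin k) (Fin d → Fin k) ℝ := fun α β => ∏ i, W⁻¹ (α i) (β i) with hN
  have hmul : matFun d k (gfun d k) * N = 1 := by
    ext β β'
    rw [Matrix.mul_apply]
    have : ∀ α : Fin d → Fin k, matFun d k (gfun d k) β α * N α β'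
        = ∏ i, (W (β i) (α i) * W⁻¹ (α i) (β' i)) := by
      intro α
      rw [matFun, hN, ← Finset.prod_mul_distrib]
      rfl
    calc ∑ α : Fin d → Fin k, matFun d k (gfun d k) β α * N α β'
        = ∑ α : Fin d → Fin k, ∏ i, (W (β i) (α i) * W⁻¹ (α i) (β' i)) :=
          Finset.sum_congr rfl fun α _ => this α
      _ = ∏ i, ∑ c : Fin k, W (β i) c * W⁻¹ c (β' i) := by
          rw [Finset.prod_univ_sum, Fintype.piFinset_univ]
      _ = ∏ i, (1 : Matrix (Fin k) (Fin k) ℝ) (β i) (β' i) := by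
          refine Finset.prod_congr rfl fun i _ => ?_
          rw [← Matrix.mul_apply, Matrix.mul_nonsing_inv W (isUnit_iff_ne_zero.2 hdetW)]
      _ = (1 : Matrix (Fin d → Fin k) (Fin d → Fin k) ℝ) β β' := by
          by_cases h : β = β'
          · subst h; simp [Matrix.one_apply]
          · obtain ⟨i, hi⟩ := Function.ne_iff.1 h
            rw [Matrix.one_apply_ne h]
            exact Finset.prod_eq_zero (Finset.mem_univ i) (by simp [Matrix.one_apply_ne hi])
  have := congrArg Matrix.det hmul
  rw [Matrix.det_mul, Matrix.det_one] at this
  exact left_ne_zero_of_mul_eq_one this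

lemma matFun_stability (d k : ℕ) : ∃ ε > (0:ℝ), ∃ K > (0:ℝ),
    ∀ p : (Fin d → Fin k) → Fin d → ℝ, (∀ α i, |p α i - gfun d k α i| ≤ ε) →
      (matFun d k p).det ≠ 0 ∧ ∀ α β, |(matFun d k p)⁻¹ α β| ≤ K := by
  classical
  have contM : Continuous (matFun d k) := by
    apply continuous_pi; intro β; apply continuous_pi; intro α
    apply continuous_finset_prod
    intro i _
    exact ((continuous_apply i).comp (continuous_apply α)).pow _
  have contDet : Continuous fun p => (matFun d k p).det := contM.matrix_det
  have h0 : (matFun d k (gfun d k)).det ≠ 0 := det_matFun_gfun d k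
  have hinveq : ∀ p, (matFun d k p)⁻¹
      = ((matFun d k p).det)⁻¹ • (matFun d k p).adjugate := by
    intro p; rw [Matrix.inv_def, Ring.inverse_eq_inv']
  have hev1 : ∀ᶠ p in nhds (gfun d k), (matFun d k p).det ≠ 0 :=
    contDet.continuousAt.eventually_ne h0
  have contInvE : ∀ α β, ContinuousAt (fun p => (matFun d k p)⁻¹ α β) (gfun d k) := by
    intro α β
    have : (fun p => (matFun d k p)⁻¹ α β)
        = fun p => ((matFun d k p).det)⁻¹ * (matFun d k p).adjugate α β := by
      funext p
      rw [hinveq p, Matrix.smul_apply, smul_eq_mul]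
    rw [this]
    exact ((contDet.continuousAt).inv₀ h0).mul
      ((contM.matrix_adjugate.matrix_elem α β).continuousAt)
  have hev2 : ∀ᶠ p in nhds (gfun d k), ∀ α β,
      |(matFun d k p)⁻¹ α β - (matFun d k (gfun d k))⁻¹ α β| < 1 := by
    rw [Filter.eventually_all]
    intro α
    rw [Filter.eventually_all]
    intro β
    have := (contInvE α β) (Metric.ball_mem_nhds _ one_pos)
    filter_upwards [this] with p hp
    simpa [Real.dist_eq] using hp
  obtain ⟨δ, hδ, hball⟩ := Metric.eventually_nhds_iff.1 (hev1.and hev2)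
  refine ⟨δ/2, by positivity, 1 + ∑ α : Fin d → Fin k, ∑ β : Fin d → Fin k,
    |(matFun d k (gfun d k))⁻¹ α β|, by positivity, ?_⟩
  intro p hp
  have hdist : dist p (gfun d k) ≤ δ/2 := by
    rw [dist_pi_le_iff (by positivity)]
    intro α
    rw [dist_pi_le_iff (by positivity)]
    intro i
    rw [Real.dist_eq]
    exact hp α i
  have := hball (lt_of_le_of_lt hdist (by linarith))
  refine ⟨this.1, ?_⟩
  intro α β
  have h2 : |(matFun d k p)⁻¹ α β - (matFun d k (gfun d k))⁻¹ α β| < 1 := this.2 α β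
  have h3 : |(matFun d k (gfun d k))⁻¹ α β|
      ≤ ∑ α' : Fin d → Fin k, ∑ β' : Fin d → Fin k, |(matFun d k (gfun d k))⁻¹ α' β'| := by
    calc |(matFun d k (gfun d k))⁻¹ α β|
        ≤ ∑ β' : Fin d → Fin k, |(matFun d k (gfun d k))⁻¹ α β'| :=
          Finset.single_le_sum (f := fun β' => |(matFun d k (gfun d k))⁻¹ α β'|)
            (fun _ _ => abs_nonneg _) (Finset.mem_univ β)
      _ ≤ _ := Finset.single_le_sum
          (f := fun α' => ∑ β' : Fin d → Fin k, |(matFun d k (gfun d k))⁻¹ α' β'|)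
          (fun _ _ => Finset.sum_nonneg fun _ _ => abs_nonneg _) (Finset.mem_univ α)
  calc |(matFun d k p)⁻¹ α β|
      ≤ |(matFun d k (gfun d k))⁻¹ α β| + 1 := by
        have := abs_sub_abs_le_abs_sub ((matFun d k p)⁻¹ α β) ((matFun d k (gfun d k))⁻¹ α β)
        linarith [h2.le]
    _ ≤ _ := by linarith

variable {d : ℕ}

lemma euclid_sum_single (y : EuclideanSpace ℝ (Fin d)) :
    ∑ i, y i • EuclideanSpace.single i (1:ℝ) = y := by
  have := (EuclideanSpace.basisFun (Fin d) ℝ).sum_repr y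
  simpa [EuclideanSpace.basisFun_apply, EuclideanSpace.basisFun_repr] using this

lemma multilinear_diag_expand {j : ℕ} (F : ContinuousMultilinearMap ℝ
    (fun _ : Fin j => EuclideanSpace ℝ (Fin d)) ℝ) (y : EuclideanSpace ℝ (Fin d)) :
    F (fun _ => y) = ∑ v : Fin j → Fin d,
      (∏ l, y (v l)) * F (fun l => EuclideanSpace.single (v l) (1:ℝ)) := by
  classical
  have h1 : (fun _ : Fin j => y) = fun _ : Fin j => ∑ i, y i • EuclideanSpace.single i (1:ℝ) := by
    funext l; rw [euclid_sum_single]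
  rw [h1]
  have h2 := F.toMultilinearMap.map_sum (g := fun _ i => y i • EuclideanSpace.single i (1:ℝ))
  have h2' : (F fun x => ∑ i : Fin d, y i • EuclideanSpace.single i 1)
      = ∑ v : Fin j → Fin d, F fun l => y (v l) • EuclideanSpace.single (v l) (1:ℝ) := h2
  rw [h2']
  refine Finset.sum_congr rfl fun v _ => ?_
  have := F.toMultilinearMap.map_smul_univ (fun l => y (v l))
    (fun l => EuclideanSpace.single (v l) (1:ℝ))
  simpa [smul_eq_mul] using this

lemma prod_comp_eq_pow {d j : ℕ} (v : Fin j → Fin d) (u : Fin d → ℝ) :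
    ∏ l, u (v l) = ∏ i, u i ^ (Finset.univ.filter (fun l => v l = i)).card := by
  classical
  rw [← Finset.prod_fiberwise_of_maps_to (fun l _ => Finset.mem_univ (v l)) (fun l => u (v l))]
  refine Finset.prod_congr rfl fun i _ => ?_
  have h1 : ∀ l ∈ Finset.univ.filter (fun l => v l = i), u (v l) = u i := fun l hl => by
    rw [(Finset.mem_filter.1 hl).2]
  rw [Finset.prod_congr rfl h1, Finset.prod_const]
/-- Integration by sampling on a cube: if `E` is `εr`-dense in a cube `Q` of sidelength `r`,
there is a finitely supported signed measure on `E` of total variation `≤ C r^d` integrating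
`C^k` functions on `Q` up to an error `C r^{d+k} sup_Q |∇^k φ|`. -/
theorem local_sampling_measure (d k : ℕ) (hk : 1 ≤ k) :
    ∃ ε > (0 : ℝ), ∃ C > (0 : ℝ),
      ∀ (a : EuclideanSpace ℝ (Fin d)) (r : ℝ), 0 < r →
      ∀ E : Set (EuclideanSpace ℝ (Fin d)), E ⊆ cube d a r →
      (∀ x ∈ cube d a r, ∃ e ∈ E, dist x e ≤ ε * r) →
      ∃ (s : Finset (EuclideanSpace ℝ (Fin d))) (c : EuclideanSpace ℝ (Fin d) → ℝ),
        ↑s ⊆ E ∧ (∑ x ∈ s, |c x|) ≤ C * r ^ d ∧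
        ∀ (φ : EuclideanSpace ℝ (Fin d) → ℝ) (M : ℝ),
          ContDiffOn ℝ k φ (cube d a r) →
          (∀ x ∈ cube d a r, ‖iteratedFDerivWithin ℝ k φ (cube d a r) x‖ ≤ M) →
          |(∫ x in cube d a r, φ x) - ∑ x ∈ s, c x * φ x| ≤ C * r ^ (d + k) * M := by
  classical
  obtain ⟨ε, hε, K, hK, hstab⟩ := matFun_stability d k
  set cardA : ℝ := (Fintype.card (Fin d → Fin k) : ℝ) with hcardA
  have hcardA0 : 0 < cardA := by
    have hne : Nonempty (Fin d → Fin k) := ⟨fun _ => ⟨0, hk⟩⟩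
    rw [hcardA]
    exact_mod_cast Fintype.card_pos_iff.2 hne
  set K2 : ℝ := cardA ^ 2 * K with hK2
  have hK20 : 0 < K2 := by positivity
  set C : ℝ := (1 + K2) * Real.sqrt d ^ k + K2 + 1 with hC
  have hsd : (0:ℝ) ≤ Real.sqrt d := Real.sqrt_nonneg _
  have hC0 : 0 < C := by positivity
  refine ⟨ε, hε, C, hC0, ?_⟩
  intro a r hr E hEQ hdense
  set Q := cube d a r with hQdef
  -- grid points and sample points
  set G : (Fin d → Fin k) → EuclideanSpace ℝ (Fin d) :=
    fun α => (WithLp.equiv 2 (Fin d → ℝ)).symm (fun i => a i + r * tnode k (α i)) with hG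
  have hGcoord : ∀ α i, G α i = a i + r * tnode k (α i) := fun α i => rfl
  have hGQ : ∀ α, G α ∈ Q := by
    intro α i
    obtain ⟨h1, h2⟩ := tnode_mem k (α i)
    rw [hGcoord]
    constructor
    · nlinarith
    · nlinarith
  choose q hqE hqdist using fun α => hdense (G α) (hGQ α)
  have hqQ : ∀ α, q α ∈ Q := fun α => hEQ (hqE α)
  -- normalized nodes
  set p : (Fin d → Fin k) → Fin d → ℝ := fun α i => (q α i - a i) / r with hp
  have hpg : ∀ α i, |p α i - gfun d k α i| ≤ ε := by
    intro α i
    have h1 : |q α i - G α i| ≤ dist (G α) (q α) := by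
      rw [abs_sub_comm]
      exact coord_dist_le _ _ i
    have h3 : p α i - gfun d k α i = (q α i - G α i) / r := by
      simp only [hp, gfun, hGcoord]
      field_simp
      ring
    rw [h3, abs_div, abs_of_pos hr, div_le_iff₀ hr]
    exact h1.trans (hqdist α)
  obtain ⟨hdet, hinv⟩ := hstab p hpg
  -- cube facts
  have hQc : IsCompact Q := isCompact_cube hr.le
  have hQm : MeasurableSet Q := measurableSet_cube
  have hQconv : Convex ℝ Q := convex_cube
  have hQu : UniqueDiffOn ℝ Q := uniqueDiffOn_cube hr
  have hvol : (volume Q).toReal = r ^ d := volume_cube_toReal hr.le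
  have hvollt : volume Q < ⊤ := volume_cube_lt_top hr.le
  -- monomials
  set mono : (Fin d → Fin k) → EuclideanSpace ℝ (Fin d) → ℝ :=
    fun β x => ∏ i, ((x i - a i) / r) ^ ((β i : ℕ)) with hmono
  have hmonoCont : ∀ β, Continuous (mono β) := by
    intro β
    apply continuous_finset_prod
    intro i _
    exact (((contCoord i).sub continuous_const).div_const r).pow _
  have hcoord01 : ∀ x ∈ Q, ∀ i, (x i - a i) / r ∈ Icc (0:ℝ) 1 := by
    intro x hx i
    obtain ⟨h1, h2⟩ := hx i
    constructor
    · apply div_nonneg _ hr.le; linarith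
    · rw [div_le_one hr]; linarith
  have hmono01 : ∀ β, ∀ x ∈ Q, mono β x ∈ Icc (0:ℝ) 1 := by
    intro β x hx
    constructor
    · apply Finset.prod_nonneg
      intro i _
      exact pow_nonneg (hcoord01 x hx i).1 _
    · apply Finset.prod_le_one
      · intro i _; exact pow_nonneg (hcoord01 x hx i).1 _
      · intro i _
        exact pow_le_one₀ (hcoord01 x hx i).1 (hcoord01 x hx i).2
  set bvec : (Fin d → Fin k) → ℝ := fun β => ∫ x in Q, mono β x with hbvec
  have hbbound : ∀ β, |bvec β| ≤ r ^ d := by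
    intro β
    have := norm_setIntegral_le_of_norm_le_const (μ := volume) (s := Q)
      (f := mono β) (C := 1) hvollt ?_
    · rw [Real.norm_eq_abs] at this
      calc |bvec β| ≤ 1 * (volume Q).toReal := this
        _ = r ^ d := by rw [one_mul, hvol]
    · intro x hx
      rw [Real.norm_eq_abs]
      rw [abs_le]
      obtain ⟨h1, h2⟩ := hmono01 β x hx
      constructor <;> linarith
  set cvec : (Fin d → Fin k) → ℝ := (matFun d k p)⁻¹ *ᵥ bvec with hcvec
  have hcbound : ∀ α, |cvec α| ≤ cardA * K * r ^ d := by
    intro α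
    calc |cvec α| = |∑ β, (matFun d k p)⁻¹ α β * bvec β| := rfl
      _ ≤ ∑ β, |(matFun d k p)⁻¹ α β * bvec β| := Finset.abs_sum_le_sum_abs _ _
      _ ≤ ∑ _β : Fin d → Fin k, K * r ^ d := by
          apply Finset.sum_le_sum
          intro β _
          rw [abs_mul]
          exact mul_le_mul (hinv α β) (hbbound β) (abs_nonneg _) hK.le
      _ = cardA * (K * r ^ d) := by
          rw [Finset.sum_const, Finset.card_univ, nsmul_eq_mul, hcardA]
      _ = cardA * K * r ^ d := by ring
  have hcsum : ∑ α, |cvec α| ≤ K2 * r ^ d := by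
    calc ∑ α, |cvec α| ≤ ∑ _α : Fin d → Fin k, cardA * K * r ^ d :=
          Finset.sum_le_sum fun α _ => hcbound α
      _ = cardA * (cardA * K * r ^ d) := by
          rw [Finset.sum_const, Finset.card_univ, nsmul_eq_mul, hcardA]
      _ = K2 * r ^ d := by rw [hK2]; ring
  -- exactness on monomials
  have hexact : ∀ β, ∑ α, mono β (q α) * cvec α = bvec β := by
    have hmv : matFun d k p *ᵥ cvec = bvec := by
      rw [hcvec, Matrix.mulVec_mulVec, Matrix.mul_nonsing_inv _ (isUnit_iff_ne_zero.2 hdet),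
        Matrix.one_mulVec]
    intro β
    have h1 := congrFun hmv β
    rw [Matrix.mulVec, dotProduct] at h1
    rw [← h1]
    rfl
  -- exactness on products
  have hex2 : ∀ (j : ℕ), j < k → ∀ (v : Fin j → Fin d),
      (∫ x in Q, ∏ l, (x (v l) - a (v l))) = ∑ α, cvec α * ∏ l, (q α (v l) - a (v l)) := by
    intro j hj v
    have hcard : ∀ i, (Finset.univ.filter (fun l => v l = i)).card < k := by
      intro i
      calc (Finset.univ.filter (fun l => v l = i)).card
          ≤ Finset.univ.card := Finset.card_filter_le _ _
        _ = j := by rw [Finset.card_univ, Fintype.card_fin]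
        _ < k := hj
    set β : Fin d → Fin k := fun i => ⟨_, hcard i⟩ with hβ
    have hprod : ∀ x : EuclideanSpace ℝ (Fin d),
        ∏ l, (x (v l) - a (v l)) = r ^ j * mono β x := by
      intro x
      have h1 : ∀ l ∈ Finset.univ, x (v l) - a (v l) = r * ((x (v l) - a (v l)) / r) :=
        fun l _ => (mul_div_cancel₀ _ hr.ne').symm
      rw [Finset.prod_congr rfl h1, Finset.prod_mul_distrib, Finset.prod_const,
        Finset.card_univ, Fintype.card_fin]
      congr 1
      rw [prod_comp_eq_pow v (fun i => (x i - a i) / r)]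
    calc (∫ x in Q, ∏ l, (x (v l) - a (v l))) = ∫ x in Q, r ^ j * mono β x := by
          apply setIntegral_congr_fun hQm
          intro x _
          exact hprod x
      _ = r ^ j * bvec β := by rw [integral_const_mul]
      _ = r ^ j * ∑ α, mono β (q α) * cvec α := by rw [hexact]
      _ = ∑ α, cvec α * ∏ l, (q α (v l) - a (v l)) := by
          rw [Finset.mul_sum]
          apply Finset.sum_congr rfl
          intro α _
          rw [hprod (q α)]
          ring
  -- the finset and coefficients
  set s : Finset (EuclideanSpace ℝ (Fin d)) := Finset.image q Finset.univ with hs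
  set c : EuclideanSpace ℝ (Fin d) → ℝ :=
    fun x => ∑ α ∈ Finset.univ.filter (fun α => q α = x), cvec α with hc
  have hsum : ∀ f : EuclideanSpace ℝ (Fin d) → ℝ,
      ∑ x ∈ s, c x * f x = ∑ α, cvec α * f (q α) := by
    intro f
    rw [← Finset.sum_fiberwise_of_maps_to (g := q)
      (fun α _ => Finset.mem_image_of_mem q (Finset.mem_univ α))
      (fun α => cvec α * f (q α))]
    apply Finset.sum_congr rfl
    intro x _
    rw [hc, Finset.sum_mul]
    apply Finset.sum_congr rfl
    intro α hα
    rw [(Finset.mem_filter.1 hα).2]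
  refine ⟨s, c, ?_, ?_, ?_⟩
  · intro x hx
    obtain ⟨α, _, rfl⟩ := Finset.mem_image.1 hx
    exact hqE α
  · calc ∑ x ∈ s, |c x| ≤ ∑ x ∈ s, ∑ α ∈ Finset.univ.filter (fun α => q α = x), |cvec α| :=
          Finset.sum_le_sum fun x _ => Finset.abs_sum_le_sum_abs _ _
      _ = ∑ α, |cvec α| := Finset.sum_fiberwise_of_maps_to
          (fun α _ => Finset.mem_image_of_mem q (Finset.mem_univ α)) _
      _ ≤ K2 * r ^ d := hcsum
      _ ≤ C * r ^ d := by
          apply mul_le_mul_of_nonneg_right _ (by positivity)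
          rw [hC]
          nlinarith [mul_nonneg (by positivity : (0:ℝ) ≤ 1 + K2) (pow_nonneg hsd k)]
  · intro φ M hφ hM
    have hM0 : 0 ≤ M := le_trans (norm_nonneg _) (hM a (corner_mem_cube hr.le))
    set T : EuclideanSpace ℝ (Fin d) → ℝ := fun x => ∑ j ∈ Finset.range k,
      (Nat.factorial j : ℝ)⁻¹ * iteratedFDerivWithin ℝ j φ Q a (fun _ => x - a) with hT
    set D : (j : ℕ) → (Fin j → Fin d) → ℝ := fun j v =>
      iteratedFDerivWithin ℝ j φ Q a (fun l => EuclideanSpace.single (v l) (1:ℝ)) with hD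
    have hsub : ∀ (x : EuclideanSpace ℝ (Fin d)) (i : Fin d), (x - a) i = x i - a i :=
      fun x i => rfl
    have hTx : ∀ x, T x = ∑ j ∈ Finset.range k, ∑ v : Fin j → Fin d,
        ((Nat.factorial j : ℝ)⁻¹ * D j v) * ∏ l, (x (v l) - a (v l)) := by
      intro x
      rw [hT]
      apply Finset.sum_congr rfl
      intro j _
      rw [multilinear_diag_expand (iteratedFDerivWithin ℝ j φ Q a) (x - a), Finset.mul_sum]
      apply Finset.sum_congr rfl
      intro v _
      simp only [hsub, hD]
      ring
    -- Taylor bound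
    have htay : ∀ x ∈ Q, |φ x - T x| ≤ M * (Real.sqrt d * r) ^ k := by
      intro x hx
      have h1 := taylor_multivar_bound hQconv hQu hk hφ (corner_mem_cube hr.le) hx hM0 hM
      have h2 : ‖x - a‖ ≤ Real.sqrt d * r := by
        rw [← dist_eq_norm]
        exact cube_subset_ball hr.le hx
      calc |φ x - T x| ≤ M * ‖x - a‖ ^ k := h1
        _ ≤ M * (Real.sqrt d * r) ^ k := by
            apply mul_le_mul_of_nonneg_left _ hM0
            exact pow_le_pow_left₀ (norm_nonneg _) h2 k
    -- integrability
    have hφint : IntegrableOn φ Q := (hφ.continuousOn).integrableOn_compact hQc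
    have hprodint : ∀ (j : ℕ) (v : Fin j → Fin d),
        IntegrableOn (fun x : EuclideanSpace ℝ (Fin d) => ∏ l, (x (v l) - a (v l))) Q := by
      intro j v
      have hcont : Continuous fun x : EuclideanSpace ℝ (Fin d) =>
          ∏ l, (x (v l) - a (v l)) :=
        continuous_finset_prod _ fun l _ => (contCoord (v l)).sub continuous_const
      exact hcont.continuousOn.integrableOn_compact hQc
    have hTint : IntegrableOn T Q := by
      have : T = fun x => ∑ j ∈ Finset.range k, ∑ v : Fin j → Fin d,
          ((Nat.factorial j : ℝ)⁻¹ * D j v) * ∏ l, (x (v l) - a (v l)) := funext hTx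
      rw [this]
      apply integrable_finset_sum
      intro j _
      apply integrable_finset_sum
      intro v _
      exact ((hprodint j v).const_mul _)
    -- exactness for T
    have hexactT : (∫ x in Q, T x) = ∑ α, cvec α * T (q α) := by
      have h1 : (∫ x in Q, T x) = ∑ j ∈ Finset.range k, ∑ v : Fin j → Fin d,
          ((Nat.factorial j : ℝ)⁻¹ * D j v) * ∫ x in Q, ∏ l, (x (v l) - a (v l)) := by
        rw [show (fun x => T x) = fun x => ∑ j ∈ Finset.range k, ∑ v : Fin j → Fin d,
          ((Nat.factorial j : ℝ)⁻¹ * D j v) * ∏ l, (x (v l) - a (v l)) from funext hTx]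
        rw [integral_finset_sum _ (fun j _ => integrable_finset_sum _
          (fun v _ => (hprodint j v).const_mul _))]
        apply Finset.sum_congr rfl
        intro j _
        rw [integral_finset_sum _ (fun v _ => (hprodint j v).const_mul _)]
        apply Finset.sum_congr rfl
        intro v _
        rw [integral_const_mul]
      rw [h1]
      have h2 : ∀ α, cvec α * T (q α) = ∑ j ∈ Finset.range k, ∑ v : Fin j → Fin d,
          ((Nat.factorial j : ℝ)⁻¹ * D j v) * (cvec α * ∏ l, (q α (v l) - a (v l))) := by
        intro α
        rw [hTx (q α), Finset.mul_sum]
        apply Finset.sum_congr rfl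
        intro j _
        rw [Finset.mul_sum]
        apply Finset.sum_congr rfl
        intro v _
        ring
      rw [Finset.sum_congr rfl fun α _ => h2 α, Finset.sum_comm]
      apply Finset.sum_congr rfl
      intro j hj
      rw [Finset.sum_comm]
      apply Finset.sum_congr rfl
      intro v _
      rw [← Finset.mul_sum, hex2 j (Finset.mem_range.1 hj) v]
    -- error bound
    have hearly : (∫ x in Q, φ x) - ∑ x ∈ s, c x * φ x
        = (∫ x in Q, (φ x - T x)) + ∑ α, cvec α * (T (q α) - φ (q α)) := by
      rw [hsum φ]
      rw [integral_sub hφint hTint]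
      have : ∑ α, cvec α * (T (q α) - φ (q α))
          = (∑ α, cvec α * T (q α)) - ∑ α, cvec α * φ (q α) := by
        rw [← Finset.sum_sub_distrib]
        apply Finset.sum_congr rfl
        intro α _
        ring
      rw [this, ← hexactT]
      ring
    have hbound1 : |∫ x in Q, (φ x - T x)| ≤ r ^ d * (M * (Real.sqrt d * r) ^ k) := by
      have := norm_setIntegral_le_of_norm_le_const (μ := volume) (s := Q)
        (f := fun x => φ x - T x) (C := M * (Real.sqrt d * r) ^ k) hvollt ?_
      · rw [Real.norm_eq_abs] at this
        calc |∫ x in Q, (φ x - T x)| ≤ M * (Real.sqrt d * r) ^ k * (volume Q).toReal := this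
          _ = r ^ d * (M * (Real.sqrt d * r) ^ k) := by rw [hvol]; ring
      · intro x hx
        rw [Real.norm_eq_abs]
        exact htay x hx
    have hbound2 : |∑ α, cvec α * (T (q α) - φ (q α))|
        ≤ K2 * r ^ d * (M * (Real.sqrt d * r) ^ k) := by
      calc |∑ α, cvec α * (T (q α) - φ (q α))|
          ≤ ∑ α, |cvec α * (T (q α) - φ (q α))| := Finset.abs_sum_le_sum_abs _ _
        _ ≤ ∑ α, |cvec α| * (M * (Real.sqrt d * r) ^ k) := by
            apply Finset.sum_le_sum
            intro α _
            rw [abs_mul]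
            apply mul_le_mul_of_nonneg_left _ (abs_nonneg _)
            rw [abs_sub_comm]
            exact htay (q α) (hqQ α)
        _ = (∑ α, |cvec α|) * (M * (Real.sqrt d * r) ^ k) := by rw [← Finset.sum_mul]
        _ ≤ K2 * r ^ d * (M * (Real.sqrt d * r) ^ k) := by
            apply mul_le_mul_of_nonneg_right hcsum (by positivity)
    calc |(∫ x in Q, φ x) - ∑ x ∈ s, c x * φ x|
        ≤ |∫ x in Q, (φ x - T x)| + |∑ α, cvec α * (T (q α) - φ (q α))| := by
          rw [hearly]; exact abs_add_le _ _
      _ ≤ r ^ d * (M * (Real.sqrt d * r) ^ k) + K2 * r ^ d * (M * (Real.sqrt d * r) ^ k) :=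
          add_le_add hbound1 hbound2
      _ = (1 + K2) * Real.sqrt d ^ k * r ^ (d + k) * M := by
          rw [mul_pow, pow_add]
          ring
      _ ≤ C * r ^ (d + k) * M := by
          apply mul_le_mul_of_nonneg_right _ hM0
          apply mul_le_mul_of_nonneg_right _ (by positivity)
          rw [hC]
          nlinarith
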